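/- Let $\mathbb{C}[x_1,\ldots,x_m]$ and the simple ideal $J = \langle x_1,\ldots,x_p, x_{p+1}x_{r+1},\ldots,x_r x_{2r-p}\rangle$. In the $x_r$-direction chart of the blow-up of $V_1 = \{x_1=\cdots=x_r=0\}$, i.e., under the ring map $\psi$ sending $x_j \mapsto \tilde{x}_j x_r$ for $1 \leq j \leq r-1$ and $x_j \mapsto x_j$ otherwise, the ideal generated by $\psi(J)$ equals $x_r \cdot \langle \tilde{x}_1,\ldots,\tilde{x}_p, \tilde{x}_{p+1}x_{r+1},\ldots,\tilde{x}_{r-1}x_{2r-p-1}, \tilde{x}_{2r-p}\rangle$, i.e., the product of the principal ideal $\langle x_r\rangle$ with another simple ideal. -/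
import Mathlib


open MvPolynomial

/-- In the `x_r`-chart of the blow-up of `V₁ = {x₁ = ⋯ = x_r = 0}`, i.e. under the
ring map `ψ` with `x_j ↦ x̃_j·x_r` for `1 ≤ j ≤ r-1` and `x_j ↦ x_j` otherwise, the
total transform of the simple ideal `J = ⟨x₁,…,x_p, x_{p+1}x_{r+1},…,x_r x_{2r-p}⟩`
factors as `⟨x_r⟩ · ⟨x̃₁,…,x̃_p, x̃_{p+1}x_{r+1},…,x̃_{r-1}x_{2r-p-1}, x_{2r-p}⟩`,
the exceptional-divisor ideal times another simple ideal.  (Variables indexed by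
`Fin m`, with `x_i` corresponding to index `i-1`.) -/
theorem blowup_chart_xr (m p r : ℕ) (hpr : p < r) (hrm : r ≤ m)
    (h2 : 2 * r - p ≤ m) :
    Ideal.map
      (MvPolynomial.aeval (fun j : Fin m =>
          if (j : ℕ) < r - 1 then
            X j * X (⟨r - 1, by omega⟩ : Fin m)
          else X j) :
        MvPolynomial (Fin m) ℂ →ₐ[ℂ] MvPolynomial (Fin m) ℂ)
      (Ideal.span
        ((Set.range fun i : Fin p =>
            (X (⟨i.1, by have := i.isLt; omega⟩ : Fin m) : MvPolynomial (Fin m) ℂ)) ∪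
          (Set.range fun k : Fin (r - p) =>
            (X (⟨p + k.1, by have := k.isLt; omega⟩ : Fin m) : MvPolynomial (Fin m) ℂ) *
              X (⟨r + k.1, by have := k.isLt; omega⟩ : Fin m))))
    = Ideal.span {(X (⟨r - 1, by omega⟩ : Fin m) : MvPolynomial (Fin m) ℂ)} *
        Ideal.span
          ((Set.range fun i : Fin p =>
              (X (⟨i.1, by have := i.isLt; omega⟩ : Fin m) : MvPolynomial (Fin m) ℂ)) ∪
            (Set.range fun k : Fin (r - p - 1) =>
              (X (⟨p + k.1, by have := k.isLt; omega⟩ : Fin m) : MvPolynomial (Fin m) ℂ) *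
                X (⟨r + k.1, by have := k.isLt; omega⟩ : Fin m)) ∪
            {(X (⟨2 * r - p - 1, by omega⟩ : Fin m) : MvPolynomial (Fin m) ℂ)}) := by

  rw [Ideal.map_span, Ideal.span_mul_span', Set.singleton_mul]
  apply le_antisymm
  · rw [Ideal.span_le]
    rintro _ ⟨y, hy, rfl⟩
    rcases hy with ⟨i, rfl⟩ | ⟨k, rfl⟩
    · -- y = X ⟨i,_⟩ with i < p
      rw [aeval_X, if_pos (show ((⟨i.1, by omega⟩ : Fin m) : ℕ) < r - 1 by
        have := i.isLt; simp; omega)]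
      refine Ideal.subset_span ⟨X (⟨i.1, by have := i.isLt; omega⟩ : Fin m),
        Or.inl (Or.inl ⟨i, rfl⟩), ?_⟩
      ring
    · -- y = X ⟨p+k,_⟩ * X ⟨r+k,_⟩ with k < r - p
      have hk := k.isLt
      rw [map_mul, aeval_X, aeval_X,
        if_neg (show ¬ ((⟨r + k.1, by omega⟩ : Fin m) : ℕ) < r - 1 by simp; omega)]
      by_cases hkk : k.1 < r - p - 1
      · rw [if_pos (show ((⟨p + k.1, by omega⟩ : Fin m) : ℕ) < r - 1 by simp; omega)]
        refine Ideal.subset_span ⟨X (⟨p + k.1, by omega⟩ : Fin m) *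
          X (⟨r + k.1, by omega⟩ : Fin m),
          Or.inl (Or.inr ⟨⟨k.1, hkk⟩, rfl⟩), ?_⟩
        ring
      · have hk1 : k.1 = r - p - 1 := by omega
        rw [if_neg (show ¬ ((⟨p + k.1, by omega⟩ : Fin m) : ℕ) < r - 1 by simp; omega)]
        refine Ideal.subset_span ⟨X (⟨2 * r - p - 1, by omega⟩ : Fin m),
          Or.inr rfl, ?_⟩
        have h1 : (⟨p + k.1, by omega⟩ : Fin m) = (⟨r - 1, by omega⟩ : Fin m) :=
          Fin.ext (by simp; omega)
        have h2' : (⟨r + k.1, by omega⟩ : Fin m) = (⟨2 * r - p - 1, by omega⟩ : Fin m) :=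
          Fin.ext (by simp; omega)
        rw [h1, h2']
  · rw [Ideal.span_le]
    rintro _ ⟨s, hs, rfl⟩
    rcases hs with (⟨i, rfl⟩ | ⟨k, rfl⟩) | rfl
    · refine Ideal.subset_span ⟨X (⟨i.1, by have := i.isLt; omega⟩ : Fin m),
        Or.inl ⟨i, rfl⟩, ?_⟩
      rw [aeval_X, if_pos (show ((⟨i.1, by omega⟩ : Fin m) : ℕ) < r - 1 by
        have := i.isLt; simp; omega)]
      ring
    · have hk := k.isLt
      refine Ideal.subset_span ⟨X (⟨p + k.1, by omega⟩ : Fin m) *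
        X (⟨r + k.1, by omega⟩ : Fin m),
        Or.inr ⟨⟨k.1, by omega⟩, rfl⟩, ?_⟩
      rw [map_mul, aeval_X, aeval_X,
        if_pos (show ((⟨p + k.1, by omega⟩ : Fin m) : ℕ) < r - 1 by simp; omega),
        if_neg (show ¬ ((⟨r + k.1, by omega⟩ : Fin m) : ℕ) < r - 1 by simp; omega)]
      ring
    · refine Ideal.subset_span ⟨X (⟨p + (r - p - 1), by omega⟩ : Fin m) *
        X (⟨r + (r - p - 1), by omega⟩ : Fin m),
        Or.inr ⟨⟨r - p - 1, by omega⟩, rfl⟩, ?_⟩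
      rw [map_mul, aeval_X, aeval_X,
        if_neg (show ¬ ((⟨p + (r - p - 1), by omega⟩ : Fin m) : ℕ) < r - 1 by simp; omega),
        if_neg (show ¬ ((⟨r + (r - p - 1), by omega⟩ : Fin m) : ℕ) < r - 1 by simp; omega)]
      have h1 : (⟨p + (r - p - 1), by omega⟩ : Fin m) = (⟨r - 1, by omega⟩ : Fin m) :=
        Fin.ext (by simp; omega)
      have h2' : (⟨r + (r - p - 1), by omega⟩ : Fin m) = (⟨2 * r - p - 1, by omega⟩ : Fin m) :=
        Fin.ext (by simp; omega)
      rw [h1, h2']
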